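/- Suppose the initial point satisfies −Σ_{i=1}^N B_iᵀ λ_i⁰ ∈ ∂g(y⁰), and let {(x^k, y^k, λ^k)} be generated by PG-ADMM (δ_i^k = 0 for all i,k) with constant step sizes c_i^k = c_i ∈ (0, 1/(L_i + γ_i‖A_i‖²)). Fix any (x*, y*, λ*) ∈ χ* and let C := Σ_{i=1}^N [ (1/γ_i)(4‖λ_i*‖² + ‖λ_i⁰‖²) + (1/(2c_i))‖x_i* − x_i⁰‖²_{Q_i} ] + (1/2)‖y* − y⁰‖²_{Σ_{i=1}^N γ_i B_iᵀB_i}, where Q_i = I − c_i γ_i A_iᵀA_i. Then for every t ≥ 1: |F(ū^t) − F(x*,y*)| ≤ C/t and Σ_{i=1}^N ‖λ_i*‖ · ‖A_i x̄_i^t + B_i ȳ^t − b_i‖ ≤ C/t. -/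

import Mathlib

open Finset Matrix MeasureTheory Filter
open scoped RealInnerProductSpace

/-- Matrix–vector multiplication between Euclidean spaces. -/
noncomputable def mvec {m n : Type*} [Fintype m] [Fintype n]
    (A : Matrix m n ℝ) (v : EuclideanSpace ℝ n) : EuclideanSpace ℝ m :=
  WithLp.toLp 2 (A.mulVec v)

/-- The `Q`-quadratic form `‖v‖²_Q = vᵀ Q v`. -/
noncomputable def qnorm {d : Type*} [Fintype d] (Q : Matrix d d ℝ)
    (v : EuclideanSpace ℝ d) : ℝ :=
  ⟪v, mvec Q v⟫

/-- Spectral norm of a matrix. -/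
noncomputable def spec {m n : Type*} [Fintype m] [Fintype n] [DecidableEq n]
    (A : Matrix m n ℝ) : ℝ :=
  ‖LinearMap.toContinuousLinearMap (Matrix.toEuclideanLin A)‖

section AuxInner
variable {E : Type*} [NormedAddCommGroup E] [InnerProductSpace ℝ E]

lemma iden3 (a b : E) : 2 * ⟪a, b⟫ = ‖a‖ ^ 2 + ‖b‖ ^ 2 - ‖a - b‖ ^ 2 := by
  have := norm_sub_sq_real a b; linarith

lemma iden2 (a b c : E) : 2 * ⟪a - b, b - c⟫ = ‖a - c‖ ^ 2 - ‖a - b‖ ^ 2 - ‖b - c‖ ^ 2 := by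
  have h := norm_add_sq_real (a - b) (b - c)
  have h2 : a - b + (b - c) = a - c := by abel
  rw [h2] at h; linarith

lemma iden4 (a b c : E) : 2 * ⟪a - b, a - c⟫ = ‖a - b‖ ^ 2 + ‖a - c‖ ^ 2 - ‖b - c‖ ^ 2 := by
  have h := iden3 (a - b) (a - c)
  have h2 : a - b - (a - c) = c - b := by abel
  rw [h2, norm_sub_rev c b] at h; linarith

lemma strong_min {D : Set E} {ψ Q : E → ℝ} {u z : E} {S : ℝ}
    (hψ : ConvexOn ℝ D ψ) (hu : u ∈ D) (hz : z ∈ D) (hS : 0 ≤ S)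
    (hmin : ∀ w ∈ D, ψ u + Q u ≤ ψ w + Q w)
    (hQ : ∀ t : ℝ, 0 < t → t < 1 →
      Q (u + t • (z - u)) = Q u + t * (Q z - Q u) - t * (1 - t) * S) :
    ψ u + Q u + S ≤ ψ z + Q z := by
  have key : ∀ t : ℝ, 0 < t → t < 1 → ψ u + Q u + (1 - t) * S ≤ ψ z + Q z := by
    intro t ht0 ht1
    have hzt : u + t • (z - u) = (1 - t) • u + t • z := by module
    have hmem : (1 - t) • u + t • z ∈ D :=
      hψ.1 hu hz (by linarith) ht0.le (by ring)
    have hψle : ψ ((1 - t) • u + t • z) ≤ (1 - t) * ψ u + t * ψ z :=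
      hψ.2 hu hz (by linarith) ht0.le (by ring)
    have h1 := hmin _ hmem
    have h2 := hQ t ht0 ht1
    rw [hzt] at h2
    have : ψ u + Q u ≤ (1 - t) * ψ u + t * ψ z + (Q u + t * (Q z - Q u) - t * (1 - t) * S) := by
      calc ψ u + Q u ≤ ψ ((1 - t) • u + t • z) + Q ((1 - t) • u + t • z) := h1
        _ ≤ _ := by rw [h2]; linarith
    have ht : t * (ψ u + Q u + (1 - t) * S) ≤ t * (ψ z + Q z) := by nlinarith
    exact le_of_mul_le_mul_left ht ht0
  by_contra h
  push_neg at h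
  set ε := ψ u + Q u + S - (ψ z + Q z) with hε
  have hε0 : 0 < ε := by simp [hε]; linarith
  set t := ε / (ε + 2 * S + 2) with htdef
  have hden : 0 < ε + 2 * S + 2 := by linarith
  have ht0 : 0 < t := div_pos hε0 hden
  have ht1 : t < 1 := by rw [div_lt_one hden]; linarith
  have htS : t * S < ε := by
    rcases eq_or_lt_of_le hS with h0 | h0
    · simp [← h0]; linarith
    · have : t * S < 1 * ε := by
        rw [htdef, div_mul_eq_mul_div, div_lt_iff₀ hden]
        nlinarith
      linarith
  have := key t ht0 ht1
  nlinarith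

variable [CompleteSpace E]

lemma descent_lemma {f : E → ℝ} {f' : E → E} {L : ℝ}
    (hgrad : ∀ z, HasGradientAt f (f' z) z)
    (hLip : ∀ z w, ‖f' z - f' w‖ ≤ L * ‖z - w‖) (a b : E) :
    f b ≤ f a + ⟪f' a, b - a⟫ + L / 2 * ‖b - a‖ ^ 2 := by
  have hf'cont : Continuous f' := by
    have : LipschitzWith (Real.toNNReal L) f' := by
      apply LipschitzWith.of_dist_le_mul
      intro z w
      rw [dist_eq_norm, dist_eq_norm]
      exact (hLip z w).trans (mul_le_mul_of_nonneg_right (Real.le_coe_toNNReal L) (norm_nonneg _))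
    exact this.continuous
  set φ : ℝ → ℝ := fun t => f (a + t • (b - a)) with hφ
  have hψcont : Continuous fun t : ℝ => a + t • (b - a) := by continuity
  have hd : ∀ t : ℝ, HasDerivAt φ ⟪f' (a + t • (b - a)), b - a⟫ t := by
    intro t
    have h1 : HasDerivAt (fun t : ℝ => a + t • (b - a)) (b - a) t := by
      simpa using ((hasDerivAt_id t).smul_const (b - a)).const_add a
    have h2 := (hgrad (a + t • (b - a))).hasFDerivAt
    have := h2.comp_hasDerivAt t h1
    simp only [InnerProductSpace.toDual_apply_apply] at this
    exact this
  have hicont : Continuous fun t : ℝ => ⟪f' (a + t • (b - a)), b - a⟫ :=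
    (hf'cont.comp hψcont).inner continuous_const
  have hFTC : φ 1 - φ 0 = ∫ t in (0:ℝ)..1, ⟪f' (a + t • (b - a)), b - a⟫ := by
    rw [intervalIntegral.integral_eq_sub_of_hasDerivAt (fun t _ => hd t)
      (hicont.intervalIntegrable 0 1)]
  have hmono : (∫ t in (0:ℝ)..1, ⟪f' (a + t • (b - a)), b - a⟫)
      ≤ ∫ t in (0:ℝ)..1, (⟪f' a, b - a⟫ + L * t * ‖b - a‖ ^ 2) := by
    apply intervalIntegral.integral_mono_on zero_le_one (hicont.intervalIntegrable 0 1)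
      ((by fun_prop : Continuous fun t : ℝ => ⟪f' a, b - a⟫ + L * t * ‖b - a‖ ^ 2).intervalIntegrable 0 1)
    intro t ht
    have h1 : ⟪f' (a + t • (b - a)) - f' a, b - a⟫ ≤ ‖f' (a + t • (b - a)) - f' a‖ * ‖b - a‖ :=
      real_inner_le_norm _ _
    have h2 : ‖f' (a + t • (b - a)) - f' a‖ ≤ L * (t * ‖b - a‖) := by
      have := hLip (a + t • (b - a)) a
      simpa [norm_smul, abs_of_nonneg ht.1] using this
    have h3 : ‖f' (a + t • (b - a)) - f' a‖ * ‖b - a‖ ≤ L * t * ‖b - a‖ ^ 2 := by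
      have := mul_le_mul_of_nonneg_right h2 (norm_nonneg (b - a))
      calc ‖f' (a + t • (b - a)) - f' a‖ * ‖b - a‖ ≤ L * (t * ‖b - a‖) * ‖b - a‖ := this
        _ = L * t * ‖b - a‖ ^ 2 := by ring
    have h4 : ⟪f' (a + t • (b - a)), b - a⟫
        = ⟪f' a, b - a⟫ + ⟪f' (a + t • (b - a)) - f' a, b - a⟫ := by
      rw [inner_sub_left]; ring
    rw [h4]
    nlinarith [h1, h3]
  have hint : (∫ t in (0:ℝ)..1, (⟪f' a, b - a⟫ + L * t * ‖b - a‖ ^ 2))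
      = ⟪f' a, b - a⟫ + L / 2 * ‖b - a‖ ^ 2 := by
    rw [intervalIntegral.integral_add (intervalIntegrable_const)
      ((by fun_prop : Continuous fun t : ℝ => L * t * ‖b - a‖ ^ 2).intervalIntegrable 0 1)]
    simp only [intervalIntegral.integral_const, smul_eq_mul]
    have : (∫ t in (0:ℝ)..1, L * t * ‖b - a‖ ^ 2) = L / 2 * ‖b - a‖ ^ 2 := by
      have h : (fun t : ℝ => L * t * ‖b - a‖ ^ 2) = fun t : ℝ => (L * ‖b - a‖ ^ 2) * t := by
        ext t; ring
      rw [h, intervalIntegral.integral_const_mul, integral_id]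
      ring
    rw [this]; ring
  have hφ0 : φ 0 = f a := by simp [hφ]
  have hφ1 : φ 1 = f b := by simp [hφ]
  rw [hφ0, hφ1] at hFTC
  linarith [hFTC, hmono, hint.le, hint.ge]

lemma grad_convex {f : E → ℝ} {f' : E → E}
    (hconv : ConvexOn ℝ Set.univ f) (hgrad : ∀ z, HasGradientAt f (f' z) z) (a z : E) :
    f a + ⟪f' a, z - a⟫ ≤ f z := by
  set φ : ℝ → ℝ := fun t => f (a + t • (z - a)) with hφ
  have hd : HasDerivAt φ ⟪f' a, z - a⟫ 0 := by
    have h1 : HasDerivAt (fun t : ℝ => a + t • (z - a)) (z - a) 0 := by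
      simpa using ((hasDerivAt_id (0:ℝ)).smul_const (z - a)).const_add a
    have h2 := (hgrad (a + (0:ℝ) • (z - a))).hasFDerivAt
    have := h2.comp_hasDerivAt 0 h1
    simp only [InnerProductSpace.toDual_apply_apply, zero_smul, add_zero] at this
    exact this
  have hslope : Filter.Tendsto (slope φ 0) (nhdsWithin 0 (Set.Ioi 0)) (nhds ⟪f' a, z - a⟫) := by
    have := hasDerivAt_iff_tendsto_slope.mp hd
    exact this.mono_left (nhdsWithin_mono 0 (fun t ht => ne_of_gt ht))
  have hev : ∀ᶠ t in nhdsWithin (0:ℝ) (Set.Ioi 0), slope φ 0 t ≤ f z - f a := by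
    filter_upwards [Ioc_mem_nhdsGT_of_mem (Set.mem_Ico.mpr ⟨le_refl 0, zero_lt_one⟩)]
    intro t ht
    obtain ⟨ht0, ht1⟩ := ht
    have hmem : f (a + t • (z - a)) ≤ (1 - t) * f a + t * f z := by
      have hc := hconv.2 (Set.mem_univ a) (Set.mem_univ z)
        (by linarith : (0:ℝ) ≤ 1 - t) ht0.le (by ring)
      have heq : (1 - t) • a + t • z = a + t • (z - a) := by module
      rwa [heq] at hc
    rw [slope_def_field]
    simp only [hφ]
    rw [div_le_iff₀ (by simpa using ht0)]
    simp only [sub_zero, zero_smul, add_zero]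
    nlinarith
  have := le_of_tendsto hslope hev
  linarith
end AuxInner

section MatAux
variable {mm nn : ℕ}

lemma mvec_norm_le (A : Matrix (Fin mm) (Fin nn) ℝ) (v : EuclideanSpace ℝ (Fin nn)) :
    ‖mvec A v‖ ≤ spec A * ‖v‖ :=
  (LinearMap.toContinuousLinearMap (Matrix.toEuclideanLin A)).le_opNorm v

lemma mvec_sub (A : Matrix (Fin mm) (Fin nn) ℝ) (v w : EuclideanSpace ℝ (Fin nn)) :
    mvec A (v - w) = mvec A v - mvec A w := by simp [mvec, Matrix.mulVec_sub]

lemma mvec_add (A : Matrix (Fin mm) (Fin nn) ℝ) (v w : EuclideanSpace ℝ (Fin nn)) :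
    mvec A (v + w) = mvec A v + mvec A w := by simp [mvec, Matrix.mulVec_add]

lemma mvec_smul (A : Matrix (Fin mm) (Fin nn) ℝ) (r : ℝ) (v : EuclideanSpace ℝ (Fin nn)) :
    mvec A (r • v) = r • mvec A v := by
  simp [mvec, Matrix.mulVec_smul]

lemma mvec_sum (A : Matrix (Fin mm) (Fin nn) ℝ) {α : Type*} (s : Finset α)
    (v : α → EuclideanSpace ℝ (Fin nn)) :
    mvec A (∑ k ∈ s, v k) = ∑ k ∈ s, mvec A (v k) :=
  map_sum (Matrix.toEuclideanLin A) v s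

lemma inner_mvec_transpose (A : Matrix (Fin mm) (Fin nn) ℝ) (w : EuclideanSpace ℝ (Fin mm))
    (v : EuclideanSpace ℝ (Fin nn)) : ⟪mvec Aᵀ w, v⟫ = ⟪w, mvec A v⟫ := by
  simp only [mvec, PiLp.inner_apply, RCLike.inner_apply, conj_trivial, Matrix.mulVec,
    dotProduct, Matrix.transpose_apply, Finset.sum_mul, Finset.mul_sum]
  rw [Finset.sum_comm]
  congr 1; ext i; congr 1; ext j; ring


lemma inner_mvec_transpose' (A : Matrix (Fin mm) (Fin nn) ℝ) (v : EuclideanSpace ℝ (Fin nn))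
    (w : EuclideanSpace ℝ (Fin mm)) : ⟪v, mvec Aᵀ w⟫ = ⟪mvec A v, w⟫ := by
  rw [real_inner_comm, inner_mvec_transpose, real_inner_comm]

lemma mvec_summat {N : ℕ} {d e : ℕ} (M : Fin N → Matrix (Fin d) (Fin e) ℝ)
    (v : EuclideanSpace ℝ (Fin e)) :
    mvec (∑ i, M i) v = ∑ i, mvec (M i) v := by
  refine PiLp.ext fun j => ?_
  have hr : (∑ i, mvec (M i) v) j = ∑ i, (mvec (M i) v) j := by
    simp [WithLp.ofLp_sum]
  rw [hr]
  simp only [mvec, Matrix.mulVec, dotProduct, Matrix.sum_apply, Finset.sum_mul]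
  rw [Finset.sum_comm]

lemma sum_Icc_one (h : ℕ → ℝ) : ∀ T : ℕ,
    ∑ k ∈ Finset.Icc 1 T, h k = ∑ k ∈ Finset.range T, h (k+1) := by
  intro T
  induction T with
  | zero => simp
  | succ s ih =>
    rw [Finset.sum_Icc_succ_top (by omega : 1 ≤ s + 1), ih, Finset.sum_range_succ]

lemma arith_D {L γ c s d q : ℝ} (hγ : 0 < γ) (hc : 0 < c)
    (hcs : c * (L + γ * s ^ 2) < 1) (hq : q ≤ s ^ 2 * d) (hd0 : 0 ≤ d) :
    γ / 2 * q + L / 2 * d ≤ (2 * c)⁻¹ * d := by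
  have h4 : (2 * c)⁻¹ = c⁻¹ / 2 := by rw [mul_inv]; ring
  have h3 : (L + γ * s ^ 2) * d ≤ c⁻¹ * d := by
    apply mul_le_mul_of_nonneg_right _ hd0
    rw [← one_div, le_div_iff₀ hc]
    nlinarith [hcs]
  rw [h4]
  nlinarith [mul_le_mul_of_nonneg_left hq hγ.le]

lemma combo_x {Xp Xs Fp Fs Fk Gp Gs Dp Ds Pp Ps Pps IP J npk nsk nsp dsk dsp dpk W γ c L κ : ℝ}
    (hE1 : Xp + (κ * dpk + Gp + W) + κ * dsp ≤ Xs + (κ * dsk + Gs + W))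
    (hE4p : Gp = Dp + Pp) (hE4s : Gs = Ds + Ps)
    (hE6 : Fp ≤ Fk + Dp + L / 2 * dpk) (hE7 : Fk + Ds ≤ Fs)
    (hE8 : IP = Pps + γ * J)
    (hE9 : γ * (2 * J) = γ * (npk + nsp - nsk))
    (hE10 : Pps = Pp - Ps)
    (hE11 : γ / 2 * npk + L / 2 * dpk ≤ κ * dpk)
    (hcg1 : κ * (c * γ * nsk) = γ / 2 * nsk) (hcg2 : κ * (c * γ * nsp) = γ / 2 * nsp) :
    Xp + Fp + IP ≤ Xs + Fs + κ * (dsk - c * γ * nsk) - κ * (dsp - c * γ * nsp) := by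
  have e1 : κ * (dsk - c * γ * nsk) = κ * dsk - γ / 2 * nsk := by
    rw [mul_sub, hcg1]
  have e2 : κ * (dsp - c * γ * nsp) = κ * dsp - γ / 2 * nsp := by
    rw [mul_sub, hcg2]
  rw [e1, e2]
  linarith

/-- per-block inequality for the x-update -/
lemma step_x (A : Matrix (Fin mm) (Fin nn) ℝ) {domξ : Set (EuclideanSpace ℝ (Fin nn))}
    {ξ f : EuclideanSpace ℝ (Fin nn) → ℝ}
    {f' : EuclideanSpace ℝ (Fin nn) → EuclideanSpace ℝ (Fin nn)}
    {L γ c : ℝ} {xk xp xs : EuclideanSpace ℝ (Fin nn)} (p : EuclideanSpace ℝ (Fin mm))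
    (hγ : 0 < γ) (hc : 0 < c) (hcs : c * (L + γ * spec A ^ 2) < 1)
    (hξconv : ConvexOn ℝ domξ ξ)
    (hfconv : ConvexOn ℝ Set.univ f)
    (hfgrad : ∀ z, HasGradientAt f (f' z) z)
    (hfLip : ∀ z w, ‖f' z - f' w‖ ≤ L * ‖z - w‖)
    (hxp : xp ∈ domξ) (hxs : xs ∈ domξ)
    (hmin : ∀ z ∈ domξ,
      ξ xp + (2 * c)⁻¹ * ‖xp - (xk - c • (f' xk + mvec Aᵀ p))‖ ^ 2
        ≤ ξ z + (2 * c)⁻¹ * ‖z - (xk - c • (f' xk + mvec Aᵀ p))‖ ^ 2) :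
    ξ xp + f xp + ⟪p + γ • (mvec A xp - mvec A xk), mvec A xp - mvec A xs⟫
      ≤ ξ xs + f xs
        + (2 * c)⁻¹ * (‖xs - xk‖ ^ 2 - c * γ * ‖mvec A xs - mvec A xk‖ ^ 2)
        - (2 * c)⁻¹ * (‖xs - xp‖ ^ 2 - c * γ * ‖mvec A xs - mvec A xp‖ ^ 2) := by
  have hc2 : (0:ℝ) < (2 * c)⁻¹ := by positivity
  set v := xk - c • (f' xk + mvec Aᵀ p) with hv
  set G := f' xk + mvec Aᵀ p with hG
  have E1 : ξ xp + (2 * c)⁻¹ * ‖xp - v‖ ^ 2 + (2 * c)⁻¹ * ‖xs - xp‖ ^ 2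
      ≤ ξ xs + (2 * c)⁻¹ * ‖xs - v‖ ^ 2 := by
    have := strong_min (Q := fun z => (2 * c)⁻¹ * ‖z - v‖ ^ 2) (S := (2 * c)⁻¹ * ‖xs - xp‖ ^ 2)
      hξconv hxp hxs (by positivity) hmin ?_
    · linarith
    · intro t ht0 ht1
      beta_reduce
      have harg : xp + t • (xs - xp) - v = (xp - v) + t • (xs - xp) := by abel
      have harg2 : xs - v = (xp - v) + (xs - xp) := by abel
      rw [harg, harg2, norm_add_sq_real, norm_add_sq_real, real_inner_smul_right, norm_smul,
        Real.norm_eq_abs, abs_of_pos ht0]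
      ring
  have hexp : ∀ z : EuclideanSpace ℝ (Fin nn),
      (2 * c)⁻¹ * ‖z - v‖ ^ 2
        = (2 * c)⁻¹ * ‖z - xk‖ ^ 2 + ⟪G, z - xk⟫ + (2 * c)⁻¹ * (c ^ 2 * ‖G‖ ^ 2) := by
    intro z
    have harg : z - v = (z - xk) + c • G := by rw [hv]; abel
    rw [harg, norm_add_sq_real, real_inner_smul_right, norm_smul, Real.norm_eq_abs,
      abs_of_pos hc, real_inner_comm]
    field_simp
  have E2 := hexp xp
  have E3 := hexp xs
  have E4 : ∀ z : EuclideanSpace ℝ (Fin nn),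
      ⟪G, z - xk⟫ = ⟪f' xk, z - xk⟫ + ⟪p, mvec A z - mvec A xk⟫ := by
    intro z
    rw [hG, inner_add_left, ← mvec_sub, inner_mvec_transpose]
  have E4p := E4 xp
  have E4s := E4 xs
  have E6 : f xp ≤ f xk + ⟪f' xk, xp - xk⟫ + L / 2 * ‖xp - xk‖ ^ 2 :=
    descent_lemma hfgrad hfLip xk xp
  have E7 : f xk + ⟪f' xk, xs - xk⟫ ≤ f xs := grad_convex hfconv hfgrad xk xs
  have E8 : ⟪p + γ • (mvec A xp - mvec A xk), mvec A xp - mvec A xs⟫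
      = ⟪p, mvec A xp - mvec A xs⟫ + γ * ⟪mvec A xp - mvec A xk, mvec A xp - mvec A xs⟫ := by
    rw [inner_add_left, real_inner_smul_left]
  have E9 : γ * (2 * ⟪mvec A xp - mvec A xk, mvec A xp - mvec A xs⟫)
      = γ * (‖mvec A xp - mvec A xk‖ ^ 2 + ‖mvec A xs - mvec A xp‖ ^ 2
          - ‖mvec A xs - mvec A xk‖ ^ 2) := by
    have h := iden4 (mvec A xp) (mvec A xk) (mvec A xs)
    rw [norm_sub_rev (mvec A xp) (mvec A xs), norm_sub_rev (mvec A xk) (mvec A xs)] at h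
    exact congrArg (γ * ·) h
  have E10 : ⟪p, mvec A xp - mvec A xs⟫
      = ⟪p, mvec A xp - mvec A xk⟫ - ⟪p, mvec A xs - mvec A xk⟫ := by
    rw [← inner_sub_right]
    congr 1; abel
  have E11 : γ / 2 * ‖mvec A xp - mvec A xk‖ ^ 2 + L / 2 * ‖xp - xk‖ ^ 2
      ≤ (2 * c)⁻¹ * ‖xp - xk‖ ^ 2 := by
    apply arith_D hγ hc hcs _ (sq_nonneg _)
    have h1 : ‖mvec A (xp - xk)‖ ≤ spec A * ‖xp - xk‖ := mvec_norm_le A (xp - xk)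
    have h0 : (0:ℝ) ≤ ‖mvec A (xp - xk)‖ := norm_nonneg _
    have hs0 : (0:ℝ) ≤ spec A := norm_nonneg _
    rw [← mvec_sub]
    nlinarith
  have hcg : ∀ X : ℝ, (2 * c)⁻¹ * (c * γ * X) = γ / 2 * X := by
    intro X; field_simp
  rw [E2, E3, E4p, E4s] at E1
  exact combo_x E1 rfl rfl E6 E7 E8 E9 E10 E11
    (hcg (‖mvec A xs - mvec A xk‖ ^ 2)) (hcg (‖mvec A xs - mvec A xp‖ ^ 2))
end MatAux

/-- per-step inequality for the y-update -/
lemma step_y {N ny : ℕ} {m n : Fin N → ℕ}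
    (A : ∀ i, Matrix (Fin (m i)) (Fin (n i)) ℝ)
    (B : ∀ i, Matrix (Fin (m i)) (Fin ny) ℝ)
    (b : ∀ i, EuclideanSpace ℝ (Fin (m i)))
    {g : EuclideanSpace ℝ (Fin ny) → ℝ} {domg : Set (EuclideanSpace ℝ (Fin ny))}
    {γ : Fin N → ℝ}
    (xp : ∀ i, EuclideanSpace ℝ (Fin (n i))) {yp : EuclideanSpace ℝ (Fin ny)}
    (lk lp : ∀ i, EuclideanSpace ℝ (Fin (m i)))
    (hγ : ∀ i, 0 < γ i) (hgconv : ConvexOn ℝ domg g) (hypdom : yp ∈ domg)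
    (hlam : ∀ i, lp i = lk i + γ i • (mvec (A i) (xp i) + mvec (B i) yp - b i))
    (hmin : ∀ z ∈ domg,
      g yp + ∑ i, γ i / 2 * ‖mvec (A i) (xp i) + mvec (B i) yp - b i + (γ i)⁻¹ • lk i‖ ^ 2
        ≤ g z + ∑ i, γ i / 2 * ‖mvec (A i) (xp i) + mvec (B i) z - b i + (γ i)⁻¹ • lk i‖ ^ 2) :
    ∀ w ∈ domg, g yp ≤ g w + ∑ i, ⟪lp i, mvec (B i) w - mvec (B i) yp⟫ := by
  intro w hw
  set T : ∀ i, EuclideanSpace ℝ (Fin (m i)) :=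
    fun i => mvec (A i) (xp i) + mvec (B i) yp - b i + (γ i)⁻¹ • lk i with hT
  set U : ∀ i, EuclideanSpace ℝ (Fin (m i)) := fun i => mvec (B i) w - mvec (B i) yp with hU
  have hTU : ∀ i, mvec (A i) (xp i) + mvec (B i) w - b i + (γ i)⁻¹ • lk i = T i + U i := by
    intro i; rw [hT, hU]; dsimp only; abel
  have harg : ∀ t : ℝ, ∀ i,
      mvec (A i) (xp i) + mvec (B i) (yp + t • (w - yp)) - b i + (γ i)⁻¹ • lk i
        = T i + t • U i := by
    intro t i
    rw [mvec_add, mvec_smul, mvec_sub, hT, hU]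
    dsimp only
    abel
  have hsm := strong_min (D := domg)
    (Q := fun z => ∑ i, γ i / 2 * ‖mvec (A i) (xp i) + mvec (B i) z - b i + (γ i)⁻¹ • lk i‖ ^ 2)
    (S := ∑ i, γ i / 2 * ‖U i‖ ^ 2)
    hgconv hypdom hw
    (Finset.sum_nonneg fun i _ => mul_nonneg (div_nonneg (hγ i).le (by norm_num)) (sq_nonneg _))
    hmin ?hQ
  case hQ =>
    intro t ht0 ht1
    beta_reduce
    have hper : ∀ i : Fin N,
        γ i / 2 * ‖mvec (A i) (xp i) + mvec (B i) (yp + t • (w - yp)) - b i + (γ i)⁻¹ • lk i‖ ^ 2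
          = γ i / 2 * ‖T i‖ ^ 2
            + t * (γ i / 2 * ‖mvec (A i) (xp i) + mvec (B i) w - b i + (γ i)⁻¹ • lk i‖ ^ 2
                - γ i / 2 * ‖T i‖ ^ 2)
            - t * (1 - t) * (γ i / 2 * ‖U i‖ ^ 2) := by
      intro i
      rw [harg t i, hTU i, norm_add_sq_real (T i) (t • U i), norm_add_sq_real (T i) (U i),
        real_inner_smul_right, norm_smul, Real.norm_eq_abs, abs_of_pos ht0]
      ring
    rw [Finset.sum_congr rfl fun i _ => hper i]
    have hrw : ∀ i : Fin N,
        γ i / 2 * ‖T i‖ ^ 2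
            + t * (γ i / 2 * ‖mvec (A i) (xp i) + mvec (B i) w - b i + (γ i)⁻¹ • lk i‖ ^ 2
                - γ i / 2 * ‖T i‖ ^ 2)
            - t * (1 - t) * (γ i / 2 * ‖U i‖ ^ 2)
        = (γ i / 2 * ‖T i‖ ^ 2
            + t * (γ i / 2 * ‖mvec (A i) (xp i) + mvec (B i) w - b i + (γ i)⁻¹ • lk i‖ ^ 2)
            + (- (t * (γ i / 2 * ‖T i‖ ^ 2)) + - (t * (1 - t) * (γ i / 2 * ‖U i‖ ^ 2)))) := by
      intro i; ring
    rw [Finset.sum_congr rfl fun i _ => hrw i]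
    simp only [Finset.sum_add_distrib, Finset.sum_neg_distrib, ← Finset.mul_sum]
    ring
  have hQw : (∑ i, γ i / 2 * ‖mvec (A i) (xp i) + mvec (B i) w - b i + (γ i)⁻¹ • lk i‖ ^ 2)
      = (∑ i, γ i / 2 * ‖T i‖ ^ 2) + (∑ i, ⟪lp i, U i⟫) + (∑ i, γ i / 2 * ‖U i‖ ^ 2) := by
    have hper : ∀ i : Fin N,
        γ i / 2 * ‖mvec (A i) (xp i) + mvec (B i) w - b i + (γ i)⁻¹ • lk i‖ ^ 2
          = γ i / 2 * ‖T i‖ ^ 2 + ⟪lp i, U i⟫ + γ i / 2 * ‖U i‖ ^ 2 := by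
      intro i
      have hlpT : lp i = γ i • T i := by
        rw [hlam i, hT]
        have h2 : γ i • ((γ i)⁻¹ • lk i) = lk i := by
          rw [smul_smul, mul_inv_cancel₀ (hγ i).ne', one_smul]
        simp only [smul_add, h2, smul_sub]
        abel
      rw [hTU i, norm_add_sq_real (T i) (U i), hlpT, real_inner_smul_left]
      ring
    rw [Finset.sum_congr rfl fun i _ => hper i]
    simp only [Finset.sum_add_distrib]
  have hcl := hsm
  beta_reduce at hcl
  rw [hQw] at hcl
  linarith
set_option maxHeartbeats 2000000 in
/-- Theorem 2 of the paper, deterministic case: `O(1/t)` ergodic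
convergence rates for PG-ADMM in both suboptimality and infeasibility.
Extended-real-valued proper closed convex functions `ξ_i` and `g` are modelled as
real-valued convex functions on their (closed, nonempty, convex) effective domains. -/
theorem pg_admm_rate
    {N : ℕ} {n m : Fin N → ℕ} {ny : ℕ}
    (A : ∀ i, Matrix (Fin (m i)) (Fin (n i)) ℝ)
    (B : ∀ i, Matrix (Fin (m i)) (Fin ny) ℝ)
    (b : ∀ i, EuclideanSpace ℝ (Fin (m i)))
    (ξ : ∀ i, EuclideanSpace ℝ (Fin (n i)) → ℝ)
    (domξ : ∀ i, Set (EuclideanSpace ℝ (Fin (n i))))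
    (f : ∀ i, EuclideanSpace ℝ (Fin (n i)) → ℝ)
    (f' : ∀ i, EuclideanSpace ℝ (Fin (n i)) → EuclideanSpace ℝ (Fin (n i)))
    (L : Fin N → ℝ)
    (g : EuclideanSpace ℝ (Fin ny) → ℝ)
    (domg : Set (EuclideanSpace ℝ (Fin ny)))
    (γ : Fin N → ℝ) (c : Fin N → ℝ)
    (x : ℕ → ∀ i, EuclideanSpace ℝ (Fin (n i)))
    (y : ℕ → EuclideanSpace ℝ (Fin ny))
    (lam : ℕ → ∀ i, EuclideanSpace ℝ (Fin (m i)))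
    (xbar : ℕ → ∀ i, EuclideanSpace ℝ (Fin (n i)))
    (ybar : ℕ → EuclideanSpace ℝ (Fin ny))
    -- ξ_i proper closed convex
    (hξconv : ∀ i, ConvexOn ℝ (domξ i) (ξ i))
    (hξlsc : ∀ i, LowerSemicontinuousOn (ξ i) (domξ i))
    (hξcl : ∀ i, IsClosed (domξ i))
    (hξne : ∀ i, (domξ i).Nonempty)
    -- f_i convex with L_i-Lipschitz gradient
    (hfconv : ∀ i, ConvexOn ℝ Set.univ (f i))
    (hfgrad : ∀ i z, HasGradientAt (f i) (f' i z) z)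
    (hfLip : ∀ i z w, ‖f' i z - f' i w‖ ≤ L i * ‖z - w‖)
    -- g proper closed convex
    (hgconv : ConvexOn ℝ domg g)
    (hglsc : LowerSemicontinuousOn g domg)
    (hgcl : IsClosed domg)
    (hgne : domg.Nonempty)
    -- parameters
    (hγ : ∀ i, 0 < γ i)
    (hcpos : ∀ i, 0 < c i)
    (hcle : ∀ i, c i < (L i + γ i * spec (A i) ^ 2)⁻¹)
    -- initial condition: −Σ Bᵢᵀ λᵢ⁰ ∈ ∂g(y⁰)
    (hinit : y 0 ∈ domg ∧ ∀ z ∈ domg,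
      g (y 0) + ⟪-(∑ i, mvec (B i)ᵀ (lam 0 i)), z - y 0⟫ ≤ g z)
    -- PG-ADMM x-update (proximal gradient step, δ_i^k = 0)
    (hxup : ∀ k i, x (k+1) i ∈ domξ i ∧ ∀ z ∈ domξ i,
      ξ i (x (k+1) i) + (2 * c i)⁻¹ *
        ‖x (k+1) i - (x k i - c i • (f' i (x k i) +
          mvec (A i)ᵀ (lam k i + γ i • (mvec (A i) (x k i) + mvec (B i) (y k) - b i))))‖ ^ 2
      ≤ ξ i z + (2 * c i)⁻¹ *
        ‖z - (x k i - c i • (f' i (x k i) +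
          mvec (A i)ᵀ (lam k i + γ i • (mvec (A i) (x k i) + mvec (B i) (y k) - b i))))‖ ^ 2)
    -- PG-ADMM y-update
    (hyup : ∀ k, y (k+1) ∈ domg ∧ ∀ z ∈ domg,
      g (y (k+1)) + ∑ i, γ i / 2 *
        ‖mvec (A i) (x (k+1) i) + mvec (B i) (y (k+1)) - b i + (γ i)⁻¹ • lam k i‖ ^ 2
      ≤ g z + ∑ i, γ i / 2 *
        ‖mvec (A i) (x (k+1) i) + mvec (B i) z - b i + (γ i)⁻¹ • lam k i‖ ^ 2)
    -- PG-ADMM dual update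
    (hlamup : ∀ k i, lam (k+1) i
      = lam k i + γ i • (mvec (A i) (x (k+1) i) + mvec (B i) (y (k+1)) - b i))
    -- ergodic averages
    (hxbar : ∀ t i, xbar t i = (t : ℝ)⁻¹ • ∑ k ∈ Finset.Icc 1 t, x k i)
    (hybar : ∀ t, ybar t = (t : ℝ)⁻¹ • ∑ k ∈ Finset.Icc 1 t, y k)
    -- (x*, y*, λ*) ∈ χ*, a saddle point of the Lagrangian
    (xs : ∀ i, EuclideanSpace ℝ (Fin (n i)))
    (ys : EuclideanSpace ℝ (Fin ny))
    (ls : ∀ i, EuclideanSpace ℝ (Fin (m i)))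
    (hsad₁ : ∀ i, xs i ∈ domξ i) (hsad₂ : ys ∈ domg)
    (hsad₃ : ∀ (x' : ∀ i, EuclideanSpace ℝ (Fin (n i))) (y' : EuclideanSpace ℝ (Fin ny)),
      (∀ i, x' i ∈ domξ i) → y' ∈ domg →
      g ys + ∑ i, (ξ i (xs i) + f i (xs i))
        + ∑ i, ⟪ls i, mvec (A i) (xs i) + mvec (B i) ys - b i⟫
      ≤ g y' + ∑ i, (ξ i (x' i) + f i (x' i))
        + ∑ i, ⟪ls i, mvec (A i) (x' i) + mvec (B i) y' - b i⟫)
    (hsad₄ : ∀ l : ∀ i, EuclideanSpace ℝ (Fin (m i)),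
      g ys + ∑ i, (ξ i (xs i) + f i (xs i))
        + ∑ i, ⟪l i, mvec (A i) (xs i) + mvec (B i) ys - b i⟫
      ≤ g ys + ∑ i, (ξ i (xs i) + f i (xs i))
        + ∑ i, ⟪ls i, mvec (A i) (xs i) + mvec (B i) ys - b i⟫) :
    ∀ t : ℕ, 1 ≤ t →
      |(g (ybar t) + ∑ i, (ξ i (xbar t i) + f i (xbar t i)))
          - (g ys + ∑ i, (ξ i (xs i) + f i (xs i)))|
        ≤ (∑ i, ((γ i)⁻¹ * (4 * ‖ls i‖ ^ 2 + ‖lam 0 i‖ ^ 2)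
              + (2 * c i)⁻¹ * qnorm (1 - (c i * γ i) • ((A i)ᵀ * A i)) (xs i - x 0 i))
            + (1/2 : ℝ) * qnorm (∑ i, γ i • ((B i)ᵀ * B i)) (ys - y 0)) / t
      ∧ ∑ i, ‖ls i‖ * ‖mvec (A i) (xbar t i) + mvec (B i) (ybar t) - b i‖
        ≤ (∑ i, ((γ i)⁻¹ * (4 * ‖ls i‖ ^ 2 + ‖lam 0 i‖ ^ 2)
              + (2 * c i)⁻¹ * qnorm (1 - (c i * γ i) • ((A i)ᵀ * A i)) (xs i - x 0 i))
            + (1/2 : ℝ) * qnorm (∑ i, γ i • ((B i)ᵀ * B i)) (ys - y 0)) / t := by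
  classical
  -- step-size consequence
  have hcsi : ∀ i, c i * (L i + γ i * spec (A i) ^ 2) < 1 := by
    intro i
    have hs : 0 < L i + γ i * spec (A i) ^ 2 := by
      by_contra h0
      push_neg at h0
      have hinv : (L i + γ i * spec (A i) ^ 2)⁻¹ ≤ 0 := inv_nonpos.mpr h0
      linarith [hcpos i, hcle i]
    have h := mul_lt_mul_of_pos_right (hcle i) hs
    rwa [inv_mul_cancel₀ hs.ne'] at h
  -- feasibility of the saddle point
  have hfeas : ∀ i, mvec (A i) (xs i) + mvec (B i) ys - b i = 0 := by
    have h := hsad₄ (fun j => ls j + (mvec (A j) (xs j) + mvec (B j) ys - b j))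
    have hexp : ∀ i ∈ Finset.univ (α := Fin N),
        ⟪ls i + (mvec (A i) (xs i) + mvec (B i) ys - b i),
          mvec (A i) (xs i) + mvec (B i) ys - b i⟫
        = ⟪ls i, mvec (A i) (xs i) + mvec (B i) ys - b i⟫
          + ‖mvec (A i) (xs i) + mvec (B i) ys - b i‖ ^ 2 := by
      intro i _
      rw [inner_add_left, real_inner_self_eq_norm_sq]
    rw [Finset.sum_congr rfl hexp] at h
    simp only [Finset.sum_add_distrib] at h
    have h2 : ∑ i, ‖mvec (A i) (xs i) + mvec (B i) ys - b i‖ ^ 2 ≤ 0 := by linarith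
    intro i
    have hnn : ∀ j ∈ Finset.univ (α := Fin N),
        (0:ℝ) ≤ ‖mvec (A j) (xs j) + mvec (B j) ys - b j‖ ^ 2 := fun j _ => sq_nonneg _
    have h3 := (Finset.sum_eq_zero_iff_of_nonneg hnn).mp
      (le_antisymm h2 (Finset.sum_nonneg hnn)) i (Finset.mem_univ i)
    exact norm_eq_zero.mp (pow_eq_zero_iff (two_ne_zero).symm.symm |>.mp h3)
  have hxdom : ∀ k i, x (k+1) i ∈ domξ i := fun k i => (hxup k i).1
  have hydom : ∀ k, y k ∈ domg := by
    intro k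
    cases k with
    | zero => exact hinit.1
    | succ j => exact (hyup j).1
  -- the running subgradient property of g
  have hS : ∀ k, ∀ w ∈ domg,
      g (y k) ≤ g w + ∑ i, ⟪lam k i, mvec (B i) w - mvec (B i) (y k)⟫ := by
    intro k
    cases k with
    | zero =>
      intro w hw
      have h := hinit.2 w hw
      have heq : ⟪-(∑ i, mvec (B i)ᵀ (lam 0 i)), w - y 0⟫
          = -(∑ i, ⟪lam 0 i, mvec (B i) w - mvec (B i) (y 0)⟫) := by
        rw [inner_neg_left, sum_inner]
        congr 1
        refine Finset.sum_congr rfl fun i _ => ?_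
        rw [inner_mvec_transpose, mvec_sub]
      rw [heq] at h
      linarith
    | succ j =>
      exact step_y A B b (x (j+1)) (lam j) (lam (j+1)) hγ hgconv (hyup j).1
        (fun i => hlamup j i) (hyup j).2
  -- monotonicity cross term
  have hmono : ∀ k, 0 ≤ ∑ i, γ i *
      ⟪mvec (B i) (y k) - mvec (B i) (y (k+1)),
        mvec (A i) (x (k+1) i) + mvec (B i) (y (k+1)) - b i⟫ := by
    intro k
    have h1 := hS k (y (k+1)) (hydom (k+1))
    have h2 := hS (k+1) (y k) (hydom k)
    have hper : ∀ i ∈ Finset.univ (α := Fin N),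
        ⟪lam k i, mvec (B i) (y (k+1)) - mvec (B i) (y k)⟫
          + ⟪lam (k+1) i, mvec (B i) (y k) - mvec (B i) (y (k+1))⟫
        = γ i * ⟪mvec (B i) (y k) - mvec (B i) (y (k+1)),
            mvec (A i) (x (k+1) i) + mvec (B i) (y (k+1)) - b i⟫ := by
      intro i _
      have hd : lam (k+1) i - lam k i
          = γ i • (mvec (A i) (x (k+1) i) + mvec (B i) (y (k+1)) - b i) := by
        rw [hlamup k i]; abel
      have e1 : ⟪lam k i, mvec (B i) (y (k+1)) - mvec (B i) (y k)⟫
          = - ⟪lam k i, mvec (B i) (y k) - mvec (B i) (y (k+1))⟫ := by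
        rw [← inner_neg_right]; congr 1; abel
      rw [e1]
      have e2 : - ⟪lam k i, mvec (B i) (y k) - mvec (B i) (y (k+1))⟫
          + ⟪lam (k+1) i, mvec (B i) (y k) - mvec (B i) (y (k+1))⟫
          = ⟪lam (k+1) i - lam k i, mvec (B i) (y k) - mvec (B i) (y (k+1))⟫ := by
        rw [inner_sub_left]; ring
      rw [e2, hd, real_inner_smul_left, real_inner_comm]
    have hsum : (∑ i, ⟪lam k i, mvec (B i) (y (k+1)) - mvec (B i) (y k)⟫)
        + (∑ i, ⟪lam (k+1) i, mvec (B i) (y k) - mvec (B i) (y (k+1))⟫)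
        = ∑ i, γ i * ⟪mvec (B i) (y k) - mvec (B i) (y (k+1)),
            mvec (A i) (x (k+1) i) + mvec (B i) (y (k+1)) - b i⟫ := by
      rw [← Finset.sum_add_distrib]
      exact Finset.sum_congr rfl hper
    linarith
  -- per-iteration per-block inequality
  have hPIi : ∀ (lt : ∀ i, EuclideanSpace ℝ (Fin (m i))) (k : ℕ) (i : Fin N),
      (ξ i (x (k+1) i) + f i (x (k+1) i)) - (ξ i (xs i) + f i (xs i))
        + ⟪lt i, mvec (A i) (x (k+1) i) + mvec (B i) (y (k+1)) - b i⟫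
        + γ i * ⟪mvec (B i) (y k) - mvec (B i) (y (k+1)),
            mvec (A i) (x (k+1) i) + mvec (B i) (y (k+1)) - b i⟫
        + ⟪lam (k+1) i, mvec (B i) ys - mvec (B i) (y (k+1))⟫
      ≤ ((2 * c i)⁻¹ * (‖xs i - x k i‖ ^ 2
              - c i * γ i * ‖mvec (A i) (xs i) - mvec (A i) (x k i)‖ ^ 2)
            + γ i / 2 * ‖mvec (B i) ys - mvec (B i) (y k)‖ ^ 2
            + (2 * γ i)⁻¹ * ‖lt i - lam k i‖ ^ 2)
        - ((2 * c i)⁻¹ * (‖xs i - x (k+1) i‖ ^ 2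
              - c i * γ i * ‖mvec (A i) (xs i) - mvec (A i) (x (k+1) i)‖ ^ 2)
            + γ i / 2 * ‖mvec (B i) ys - mvec (B i) (y (k+1))‖ ^ 2
            + (2 * γ i)⁻¹ * ‖lt i - lam (k+1) i‖ ^ 2) := by
    intro lt k i
    have SX := step_x (A i)
      (p := lam k i + γ i • (mvec (A i) (x k i) + mvec (B i) (y k) - b i))
      (hγ i) (hcpos i) (hcsi i) (hξconv i) (hfconv i) (hfgrad i) (hfLip i)
      (hxdom k i) (hsad₁ i) (hxup k i).2
    have hpl : lam k i + γ i • (mvec (A i) (x k i) + mvec (B i) (y k) - b i)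
        + γ i • (mvec (A i) (x (k+1) i) - mvec (A i) (x k i))
        = lam (k+1) i + γ i • (mvec (B i) (y k) - mvec (B i) (y (k+1))) := by
      rw [hlamup k i]
      module
    have hplSX : ⟪lam k i + γ i • (mvec (A i) (x k i) + mvec (B i) (y k) - b i)
        + γ i • (mvec (A i) (x (k+1) i) - mvec (A i) (x k i)),
        mvec (A i) (x (k+1) i) - mvec (A i) (xs i)⟫
        = ⟪lam (k+1) i + γ i • (mvec (B i) (y k) - mvec (B i) (y (k+1))),
          mvec (A i) (x (k+1) i) - mvec (A i) (xs i)⟫ := by rw [hpl]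
    rw [hplSX] at SX
    have hxs2 : mvec (A i) (xs i) = b i - mvec (B i) ys :=
      eq_sub_of_add_eq (sub_eq_zero.mp (hfeas i))
    have hAd : mvec (A i) (x (k+1) i) - mvec (A i) (xs i)
        = (mvec (A i) (x (k+1) i) + mvec (B i) (y (k+1)) - b i)
          + (mvec (B i) ys - mvec (B i) (y (k+1))) := by
      rw [hxs2]; abel
    have hdec : ⟪lam (k+1) i + γ i • (mvec (B i) (y k) - mvec (B i) (y (k+1))),
        mvec (A i) (x (k+1) i) - mvec (A i) (xs i)⟫
        = ⟪lam (k+1) i, mvec (A i) (x (k+1) i) + mvec (B i) (y (k+1)) - b i⟫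
          + ⟪lam (k+1) i, mvec (B i) ys - mvec (B i) (y (k+1))⟫
          + γ i * ⟪mvec (B i) (y k) - mvec (B i) (y (k+1)),
              mvec (A i) (x (k+1) i) + mvec (B i) (y (k+1)) - b i⟫
          + γ i * ⟪mvec (B i) (y k) - mvec (B i) (y (k+1)),
              mvec (B i) ys - mvec (B i) (y (k+1))⟫ := by
      rw [hAd, inner_add_left, real_inner_smul_left, inner_add_right, inner_add_right]
      ring
    rw [hdec] at SX
    have hEL : ⟪lt i, mvec (A i) (x (k+1) i) + mvec (B i) (y (k+1)) - b i⟫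
        - ⟪lam (k+1) i, mvec (A i) (x (k+1) i) + mvec (B i) (y (k+1)) - b i⟫
        = (2 * γ i)⁻¹ * ‖lt i - lam k i‖ ^ 2 - (2 * γ i)⁻¹ * ‖lt i - lam (k+1) i‖ ^ 2
          - (2 * γ i)⁻¹ * ‖lam (k+1) i - lam k i‖ ^ 2 := by
      have hd : lam (k+1) i - lam k i
          = γ i • (mvec (A i) (x (k+1) i) + mvec (B i) (y (k+1)) - b i) := by
        rw [hlamup k i]; abel
      have e0 : ⟪lt i, mvec (A i) (x (k+1) i) + mvec (B i) (y (k+1)) - b i⟫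
          - ⟪lam (k+1) i, mvec (A i) (x (k+1) i) + mvec (B i) (y (k+1)) - b i⟫
          = ⟪lt i - lam (k+1) i, mvec (A i) (x (k+1) i) + mvec (B i) (y (k+1)) - b i⟫ := by
        rw [inner_sub_left]
      have e1 : mvec (A i) (x (k+1) i) + mvec (B i) (y (k+1)) - b i
          = (γ i)⁻¹ • (lam (k+1) i - lam k i) := by
        rw [hd, smul_smul, inv_mul_cancel₀ (hγ i).ne', one_smul]
      have e2 := iden2 (lt i) (lam (k+1) i) (lam k i)
      rw [e0, e1, real_inner_smul_right,
        show ⟪lt i - lam (k+1) i, lam (k+1) i - lam k i⟫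
          = (‖lt i - lam k i‖ ^ 2 - ‖lt i - lam (k+1) i‖ ^ 2
            - ‖lam (k+1) i - lam k i‖ ^ 2) / 2 by linarith [e2],
        mul_inv]
      ring
    have hEY : γ i * (2 * ⟪mvec (B i) (y k) - mvec (B i) (y (k+1)),
          mvec (B i) ys - mvec (B i) (y (k+1))⟫)
        = γ i * (‖mvec (B i) (y k) - mvec (B i) (y (k+1))‖ ^ 2
            + ‖mvec (B i) ys - mvec (B i) (y (k+1))‖ ^ 2
            - ‖mvec (B i) ys - mvec (B i) (y k)‖ ^ 2) := by
      have h := iden3 (mvec (B i) (y k) - mvec (B i) (y (k+1)))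
        (mvec (B i) ys - mvec (B i) (y (k+1)))
      have harg : (mvec (B i) (y k) - mvec (B i) (y (k+1)))
          - (mvec (B i) ys - mvec (B i) (y (k+1)))
          = mvec (B i) (y k) - mvec (B i) ys := by abel
      rw [harg, norm_sub_rev (mvec (B i) (y k)) (mvec (B i) ys)] at h
      exact congrArg (γ i * ·) h
    have hnn1 : 0 ≤ (2 * γ i)⁻¹ * ‖lam (k+1) i - lam k i‖ ^ 2 :=
      mul_nonneg (inv_nonneg.mpr (by linarith [hγ i])) (sq_nonneg _)
    have hnn2 : 0 ≤ γ i / 2 * ‖mvec (B i) (y k) - mvec (B i) (y (k+1))‖ ^ 2 :=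
      mul_nonneg (div_nonneg (hγ i).le (by norm_num)) (sq_nonneg _)
    linarith [SX, hEL, hEY, hnn1, hnn2]
  -- summed per-iteration inequality
  have hPI : ∀ (lt : ∀ i, EuclideanSpace ℝ (Fin (m i))) (k : ℕ),
      ((g (y (k+1)) + ∑ i, (ξ i (x (k+1) i) + f i (x (k+1) i)))
        - (g ys + ∑ i, (ξ i (xs i) + f i (xs i))))
        + ∑ i, ⟪lt i, mvec (A i) (x (k+1) i) + mvec (B i) (y (k+1)) - b i⟫
      ≤ (∑ i, ((2 * c i)⁻¹ * (‖xs i - x k i‖ ^ 2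
              - c i * γ i * ‖mvec (A i) (xs i) - mvec (A i) (x k i)‖ ^ 2)
            + γ i / 2 * ‖mvec (B i) ys - mvec (B i) (y k)‖ ^ 2
            + (2 * γ i)⁻¹ * ‖lt i - lam k i‖ ^ 2))
        - (∑ i, ((2 * c i)⁻¹ * (‖xs i - x (k+1) i‖ ^ 2
              - c i * γ i * ‖mvec (A i) (xs i) - mvec (A i) (x (k+1) i)‖ ^ 2)
            + γ i / 2 * ‖mvec (B i) ys - mvec (B i) (y (k+1))‖ ^ 2
            + (2 * γ i)⁻¹ * ‖lt i - lam (k+1) i‖ ^ 2)) := by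
    intro lt k
    have hsumle := Finset.sum_le_sum (fun i (_ : i ∈ Finset.univ) => hPIi lt k i)
    have hg := hS (k+1) ys hsad₂
    have hm := hmono k
    simp only [Finset.sum_add_distrib, Finset.sum_sub_distrib] at hsumle ⊢
    linarith [hsumle, hg, hm]
  -- nonnegativity of the Q-seminorm
  have hQpos : ∀ i (u : EuclideanSpace ℝ (Fin (n i))),
      c i * γ i * ‖mvec (A i) u‖ ^ 2 ≤ ‖u‖ ^ 2 := by
    intro i u
    rcases isEmpty_or_nonempty (Fin (n i)) with he | hne
    · have hu : u = 0 := Subsingleton.elim u 0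
      have hz : mvec (A i) u = 0 := by
        rw [hu]; simp [mvec]
      rw [hz, hu]
      simp
    · obtain ⟨j⟩ := hne
      have hL0 : 0 ≤ L i := by
        have h := hfLip i (EuclideanSpace.single j (1:ℝ)) 0
        have h2 : ‖(EuclideanSpace.single j (1:ℝ)) - 0‖ = (1:ℝ) := by
          rw [sub_zero, EuclideanSpace.norm_single]; norm_num
        rw [h2, mul_one] at h
        exact le_trans (norm_nonneg _) h
      have h1 : ‖mvec (A i) u‖ ≤ spec (A i) * ‖u‖ := mvec_norm_le (A i) u
      have hs0 : (0:ℝ) ≤ spec (A i) := norm_nonneg _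
      have h2 : ‖mvec (A i) u‖ ^ 2 ≤ spec (A i) ^ 2 * ‖u‖ ^ 2 := by
        nlinarith [norm_nonneg (mvec (A i) u), norm_nonneg u]
      have h3 := mul_le_mul_of_nonneg_left h2
        (mul_nonneg (hcpos i).le (hγ i).le)
      have h4 := mul_le_mul_of_nonneg_right (hcsi i).le (sq_nonneg ‖u‖)
      have h5 : 0 ≤ c i * L i * ‖u‖ ^ 2 :=
        mul_nonneg (mul_nonneg (hcpos i).le hL0) (sq_nonneg _)
      nlinarith [h3, h4, h5]
  -- W t is nonnegative
  have hWnn : ∀ (lt : ∀ i, EuclideanSpace ℝ (Fin (m i))) (j : ℕ),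
      0 ≤ ∑ i, ((2 * c i)⁻¹ * (‖xs i - x j i‖ ^ 2
              - c i * γ i * ‖mvec (A i) (xs i) - mvec (A i) (x j i)‖ ^ 2)
            + γ i / 2 * ‖mvec (B i) ys - mvec (B i) (y j)‖ ^ 2
            + (2 * γ i)⁻¹ * ‖lt i - lam j i‖ ^ 2) := by
    intro lt j
    refine Finset.sum_nonneg fun i _ => ?_
    have h1 : 0 ≤ (2 * c i)⁻¹ * (‖xs i - x j i‖ ^ 2
        - c i * γ i * ‖mvec (A i) (xs i) - mvec (A i) (x j i)‖ ^ 2) := by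
      apply mul_nonneg (inv_nonneg.mpr (by linarith [hcpos i]))
      have := hQpos i (xs i - x j i)
      rw [mvec_sub] at this
      linarith
    have h2 : 0 ≤ γ i / 2 * ‖mvec (B i) ys - mvec (B i) (y j)‖ ^ 2 :=
      mul_nonneg (div_nonneg (hγ i).le (by norm_num)) (sq_nonneg _)
    have h3 : 0 ≤ (2 * γ i)⁻¹ * ‖lt i - lam j i‖ ^ 2 :=
      mul_nonneg (inv_nonneg.mpr (by linarith [hγ i])) (sq_nonneg _)
    linarith
  -- telescoping
  have hTel : ∀ (lt : ∀ i, EuclideanSpace ℝ (Fin (m i))) (t : ℕ),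
      (∑ k ∈ Finset.range t,
        (((g (y (k+1)) + ∑ i, (ξ i (x (k+1) i) + f i (x (k+1) i)))
          - (g ys + ∑ i, (ξ i (xs i) + f i (xs i))))
          + ∑ i, ⟪lt i, mvec (A i) (x (k+1) i) + mvec (B i) (y (k+1)) - b i⟫))
      ≤ ∑ i, ((2 * c i)⁻¹ * (‖xs i - x 0 i‖ ^ 2
              - c i * γ i * ‖mvec (A i) (xs i) - mvec (A i) (x 0 i)‖ ^ 2)
            + γ i / 2 * ‖mvec (B i) ys - mvec (B i) (y 0)‖ ^ 2
            + (2 * γ i)⁻¹ * ‖lt i - lam 0 i‖ ^ 2) := by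
    intro lt t
    have hsum := Finset.sum_le_sum (fun k (_ : k ∈ Finset.range t) => hPI lt k)
    have tele := Finset.sum_range_sub' (f := fun j =>
      ∑ i, ((2 * c i)⁻¹ * (‖xs i - x j i‖ ^ 2
              - c i * γ i * ‖mvec (A i) (xs i) - mvec (A i) (x j i)‖ ^ 2)
            + γ i / 2 * ‖mvec (B i) ys - mvec (B i) (y j)‖ ^ 2
            + (2 * γ i)⁻¹ * ‖lt i - lam j i‖ ^ 2)) t
    beta_reduce at tele
    linarith [hsum, tele, hWnn lt t]
  -- qnorm identities
  have hq1 : ∀ i (v : EuclideanSpace ℝ (Fin (n i))),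
      qnorm (1 - (c i * γ i) • ((A i)ᵀ * A i)) v
        = ‖v‖ ^ 2 - c i * γ i * ‖mvec (A i) v‖ ^ 2 := by
    intro i v
    have h1 : mvec (1 - (c i * γ i) • ((A i)ᵀ * A i)) v
        = v - (c i * γ i) • mvec (A i)ᵀ (mvec (A i) v) := by
      show WithLp.toLp 2 ((1 - (c i * γ i) • ((A i)ᵀ * A i)).mulVec v) = _
      rw [Matrix.sub_mulVec, Matrix.one_mulVec, Matrix.smul_mulVec,
        ← Matrix.mulVec_mulVec]
      rfl
    rw [qnorm, h1, inner_sub_right, real_inner_smul_right, inner_mvec_transpose',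
      real_inner_self_eq_norm_sq, real_inner_self_eq_norm_sq]
  have hq2 : ∀ (v : EuclideanSpace ℝ (Fin ny)),
      qnorm (∑ i, γ i • ((B i)ᵀ * B i)) v = ∑ i, γ i * ‖mvec (B i) v‖ ^ 2 := by
    intro v
    have h1 : mvec (∑ i, γ i • ((B i)ᵀ * B i)) v
        = ∑ i, γ i • mvec (B i)ᵀ (mvec (B i) v) := by
      rw [mvec_summat]
      refine Finset.sum_congr rfl fun i _ => ?_
      show WithLp.toLp 2 ((γ i • ((B i)ᵀ * B i)).mulVec v) = _
      rw [Matrix.smul_mulVec, ← Matrix.mulVec_mulVec]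
      rfl
    rw [qnorm, h1, inner_sum]
    refine Finset.sum_congr rfl fun i _ => ?_
    rw [real_inner_smul_right, inner_mvec_transpose', real_inner_self_eq_norm_sq]
  intro t ht
  simp only [hq1, hq2, mvec_sub]
  have htR : (0:ℝ) < (t : ℝ) := by
    have h0 : (0:ℕ) < t := lt_of_lt_of_le Nat.zero_lt_one ht
    exact_mod_cast h0
  have htne : (t:ℝ) ≠ 0 := ne_of_gt htR
  have hcard : (Finset.Icc 1 t).card = t := by rw [Nat.card_Icc]; omega
  have hwsum : ∑ k ∈ Finset.Icc 1 t, (t:ℝ)⁻¹ = 1 := by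
    rw [Finset.sum_const, hcard, nsmul_eq_mul, mul_inv_cancel₀ htne]
  have hwnn : ∀ k ∈ Finset.Icc 1 t, (0:ℝ) ≤ (t:ℝ)⁻¹ := fun k _ => inv_nonneg.mpr htR.le
  have hkmem : ∀ k ∈ Finset.Icc 1 t, ∃ j, k = j + 1 := by
    intro k hk
    rcases Finset.mem_Icc.mp hk with ⟨h1, _⟩
    exact ⟨k - 1, by omega⟩
  have hxmem : ∀ i, ∀ k ∈ Finset.Icc 1 t, x k i ∈ domξ i := by
    intro i k hk
    obtain ⟨j, rfl⟩ := hkmem k hk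
    exact hxdom j i
  have hymem : ∀ k ∈ Finset.Icc 1 t, y k ∈ domg := fun k _ => hydom k
  have hybar' : ybar t = ∑ k ∈ Finset.Icc 1 t, (t:ℝ)⁻¹ • y k := by
    rw [hybar t, Finset.smul_sum]
  have hxbar' : ∀ i, xbar t i = ∑ k ∈ Finset.Icc 1 t, (t:ℝ)⁻¹ • x k i := by
    intro i; rw [hxbar t i, Finset.smul_sum]
  have hgJ : g (ybar t) ≤ ∑ k ∈ Finset.Icc 1 t, (t:ℝ)⁻¹ * g (y k) := by
    rw [hybar']
    exact hgconv.map_sum_le hwnn hwsum hymem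
  have hxmemJ : ∀ i, xbar t i ∈ domξ i := by
    intro i
    rw [hxbar' i]
    exact (hξconv i).1.sum_mem hwnn hwsum (hxmem i)
  have hymemJ : ybar t ∈ domg := by
    rw [hybar']
    exact hgconv.1.sum_mem hwnn hwsum hymem
  have hξJ : ∀ i, ξ i (xbar t i) ≤ ∑ k ∈ Finset.Icc 1 t, (t:ℝ)⁻¹ * ξ i (x k i) := by
    intro i; rw [hxbar' i]
    exact (hξconv i).map_sum_le hwnn hwsum (hxmem i)
  have hfJ : ∀ i, f i (xbar t i) ≤ ∑ k ∈ Finset.Icc 1 t, (t:ℝ)⁻¹ * f i (x k i) := by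
    intro i; rw [hxbar' i]
    exact (hfconv i).map_sum_le hwnn hwsum (fun k _ => Set.mem_univ _)
  have hRbar : ∀ i, mvec (A i) (xbar t i) + mvec (B i) (ybar t) - b i
      = (t:ℝ)⁻¹ • ∑ k ∈ Finset.Icc 1 t, (mvec (A i) (x k i) + mvec (B i) (y k) - b i) := by
    intro i
    have hbc : ∑ _k ∈ Finset.Icc 1 t, b i = (t:ℝ) • b i := by
      rw [Finset.sum_const, hcard, ← Nat.cast_smul_eq_nsmul ℝ]
    rw [hxbar t i, hybar t, mvec_smul, mvec_smul, mvec_sum, mvec_sum,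
      Finset.sum_sub_distrib, Finset.sum_add_distrib, hbc, smul_sub, smul_add,
      smul_smul, inv_mul_cancel₀ htne, one_smul]
  have hIbar : ∀ (lt : ∀ i, EuclideanSpace ℝ (Fin (m i))),
      ∑ i, ⟪lt i, mvec (A i) (xbar t i) + mvec (B i) (ybar t) - b i⟫
      = (t:ℝ)⁻¹ * ∑ k ∈ Finset.Icc 1 t, ∑ i,
          ⟪lt i, mvec (A i) (x k i) + mvec (B i) (y k) - b i⟫ := by
    intro lt
    have hper : ∀ i ∈ Finset.univ (α := Fin N),
        ⟪lt i, mvec (A i) (xbar t i) + mvec (B i) (ybar t) - b i⟫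
        = (t:ℝ)⁻¹ * ∑ k ∈ Finset.Icc 1 t,
            ⟪lt i, mvec (A i) (x k i) + mvec (B i) (y k) - b i⟫ := by
      intro i _
      rw [hRbar i, real_inner_smul_right, inner_sum]
    rw [Finset.sum_congr rfl hper, ← Finset.mul_sum, Finset.sum_comm]
  have hreidx : ∀ (h : ℕ → ℝ),
      ∑ k ∈ Finset.Icc 1 t, h k = ∑ k ∈ Finset.range t, h (k+1) :=
    fun h => sum_Icc_one h t
  -- the key averaged bound, for an arbitrary multiplier
  have hstar : ∀ (lt : ∀ i, EuclideanSpace ℝ (Fin (m i))),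
      ((g (ybar t) + ∑ i, (ξ i (xbar t i) + f i (xbar t i)))
        - (g ys + ∑ i, (ξ i (xs i) + f i (xs i))))
        + ∑ i, ⟪lt i, mvec (A i) (xbar t i) + mvec (B i) (ybar t) - b i⟫
      ≤ (∑ i, ((2 * c i)⁻¹ * (‖xs i - x 0 i‖ ^ 2
              - c i * γ i * ‖mvec (A i) (xs i) - mvec (A i) (x 0 i)‖ ^ 2)
            + γ i / 2 * ‖mvec (B i) ys - mvec (B i) (y 0)‖ ^ 2
            + (2 * γ i)⁻¹ * ‖lt i - lam 0 i‖ ^ 2)) / t := by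
    intro lt
    have hT := hTel lt t
    have hT2 : (∑ k ∈ Finset.Icc 1 t,
        (((g (y k) + ∑ i, (ξ i (x k i) + f i (x k i)))
          - (g ys + ∑ i, (ξ i (xs i) + f i (xs i))))
          + ∑ i, ⟪lt i, mvec (A i) (x k i) + mvec (B i) (y k) - b i⟫))
        ≤ ∑ i, ((2 * c i)⁻¹ * (‖xs i - x 0 i‖ ^ 2
              - c i * γ i * ‖mvec (A i) (xs i) - mvec (A i) (x 0 i)‖ ^ 2)
            + γ i / 2 * ‖mvec (B i) ys - mvec (B i) (y 0)‖ ^ 2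
            + (2 * γ i)⁻¹ * ‖lt i - lam 0 i‖ ^ 2) := (hreidx _).trans_le hT
    have hT3 := mul_le_mul_of_nonneg_left hT2 (inv_nonneg.mpr htR.le)
    have hsplit : (t:ℝ)⁻¹ * (∑ k ∈ Finset.Icc 1 t,
        (((g (y k) + ∑ i, (ξ i (x k i) + f i (x k i)))
          - (g ys + ∑ i, (ξ i (xs i) + f i (xs i))))
          + ∑ i, ⟪lt i, mvec (A i) (x k i) + mvec (B i) (y k) - b i⟫))
        = ((t:ℝ)⁻¹ * ∑ k ∈ Finset.Icc 1 t, g (y k))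
          + ((t:ℝ)⁻¹ * ∑ k ∈ Finset.Icc 1 t, ∑ i, (ξ i (x k i) + f i (x k i)))
          - (g ys + ∑ i, (ξ i (xs i) + f i (xs i)))
          + ((t:ℝ)⁻¹ * ∑ k ∈ Finset.Icc 1 t, ∑ i,
              ⟪lt i, mvec (A i) (x k i) + mvec (B i) (y k) - b i⟫) := by
      simp only [Finset.sum_add_distrib, Finset.sum_sub_distrib, Finset.sum_const, hcard,
        nsmul_eq_mul]
      field_simp
    have hA1 : g (ybar t) ≤ (t:ℝ)⁻¹ * ∑ k ∈ Finset.Icc 1 t, g (y k) := by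
      rw [Finset.mul_sum]; exact hgJ
    have hA2 : ∑ i, (ξ i (xbar t i) + f i (xbar t i))
        ≤ (t:ℝ)⁻¹ * ∑ k ∈ Finset.Icc 1 t, ∑ i, (ξ i (x k i) + f i (x k i)) := by
      have hstep1 : ∀ i ∈ Finset.univ (α := Fin N),
          ξ i (xbar t i) + f i (xbar t i)
            ≤ ∑ k ∈ Finset.Icc 1 t, (t:ℝ)⁻¹ * (ξ i (x k i) + f i (x k i)) := by
        intro i _
        have hcomb : ∑ k ∈ Finset.Icc 1 t, (t:ℝ)⁻¹ * (ξ i (x k i) + f i (x k i))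
            = (∑ k ∈ Finset.Icc 1 t, (t:ℝ)⁻¹ * ξ i (x k i))
              + (∑ k ∈ Finset.Icc 1 t, (t:ℝ)⁻¹ * f i (x k i)) := by
          rw [← Finset.sum_add_distrib]
          exact Finset.sum_congr rfl fun k _ => by ring
        rw [hcomb]
        linarith [hξJ i, hfJ i]
      calc ∑ i, (ξ i (xbar t i) + f i (xbar t i))
          ≤ ∑ i, ∑ k ∈ Finset.Icc 1 t, (t:ℝ)⁻¹ * (ξ i (x k i) + f i (x k i)) :=
            Finset.sum_le_sum hstep1
        _ = ∑ k ∈ Finset.Icc 1 t, ∑ i, (t:ℝ)⁻¹ * (ξ i (x k i) + f i (x k i)) :=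
            Finset.sum_comm
        _ = (t:ℝ)⁻¹ * ∑ k ∈ Finset.Icc 1 t, ∑ i, (ξ i (x k i) + f i (x k i)) := by
            rw [Finset.mul_sum]
            exact Finset.sum_congr rfl fun k _ => by rw [Finset.mul_sum]
    have hA3 := hIbar lt
    rw [div_eq_inv_mul]
    linarith [hA1, hA2, hA3, hT3, hsplit]
  -- saddle-point lower bound
  have hsadL : ∑ i, ⟪ls i, mvec (A i) (xs i) + mvec (B i) ys - b i⟫ = 0 :=
    Finset.sum_eq_zero fun i _ => by rw [hfeas i, inner_zero_right]
  have hlow : -(∑ i, ‖ls i‖ * ‖mvec (A i) (xbar t i) + mvec (B i) (ybar t) - b i‖)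
      ≤ (g (ybar t) + ∑ i, (ξ i (xbar t i) + f i (xbar t i)))
        - (g ys + ∑ i, (ξ i (xs i) + f i (xs i))) := by
    have h := hsad₃ (xbar t) (ybar t) hxmemJ hymemJ
    rw [hsadL] at h
    have hCS : ∑ i, ⟪ls i, mvec (A i) (xbar t i) + mvec (B i) (ybar t) - b i⟫
        ≤ ∑ i, ‖ls i‖ * ‖mvec (A i) (xbar t i) + mvec (B i) (ybar t) - b i‖ :=
      Finset.sum_le_sum fun i _ => real_inner_le_norm _ _
    linarith [h, hCS]
  -- comparison of the two constants
  have hWC : ∀ (lt : ∀ i, EuclideanSpace ℝ (Fin (m i))), (∀ i, ‖lt i‖ ≤ 2 * ‖ls i‖) →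
      (∑ i, ((2 * c i)⁻¹ * (‖xs i - x 0 i‖ ^ 2
              - c i * γ i * ‖mvec (A i) (xs i) - mvec (A i) (x 0 i)‖ ^ 2)
            + γ i / 2 * ‖mvec (B i) ys - mvec (B i) (y 0)‖ ^ 2
            + (2 * γ i)⁻¹ * ‖lt i - lam 0 i‖ ^ 2))
      ≤ (∑ i, ((γ i)⁻¹ * (4 * ‖ls i‖ ^ 2 + ‖lam 0 i‖ ^ 2)
            + (2 * c i)⁻¹ * (‖xs i - x 0 i‖ ^ 2
              - c i * γ i * ‖mvec (A i) (xs i) - mvec (A i) (x 0 i)‖ ^ 2)))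
        + (1/2 : ℝ) * ∑ i, γ i * ‖mvec (B i) ys - mvec (B i) (y 0)‖ ^ 2 := by
    intro lt hlt
    rw [Finset.mul_sum, ← Finset.sum_add_distrib]
    refine Finset.sum_le_sum fun i _ => ?_
    have h1 : ‖lt i - lam 0 i‖ ≤ 2 * ‖ls i‖ + ‖lam 0 i‖ :=
      (norm_sub_le _ _).trans (add_le_add_left (hlt i) _)
    have h2 : ‖lt i - lam 0 i‖ ^ 2 ≤ 8 * ‖ls i‖ ^ 2 + 2 * ‖lam 0 i‖ ^ 2 := by
      nlinarith [h1, norm_nonneg (lt i - lam 0 i), sq_nonneg (2 * ‖ls i‖ - ‖lam 0 i‖),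
        norm_nonneg (ls i), norm_nonneg (lam 0 i)]
    have h3 : (2 * γ i)⁻¹ * ‖lt i - lam 0 i‖ ^ 2
        ≤ (2 * γ i)⁻¹ * (8 * ‖ls i‖ ^ 2 + 2 * ‖lam 0 i‖ ^ 2) :=
      mul_le_mul_of_nonneg_left h2 (inv_nonneg.mpr (by linarith [hγ i]))
    have h4 : (2 * γ i)⁻¹ * (8 * ‖ls i‖ ^ 2 + 2 * ‖lam 0 i‖ ^ 2)
        = (γ i)⁻¹ * (4 * ‖ls i‖ ^ 2 + ‖lam 0 i‖ ^ 2) := by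
      have hne : γ i ≠ 0 := (hγ i).ne'
      field_simp
      ring
    have h5 : (1/2 : ℝ) * (γ i * ‖mvec (B i) ys - mvec (B i) (y 0)‖ ^ 2)
        = γ i / 2 * ‖mvec (B i) ys - mvec (B i) (y 0)‖ ^ 2 := by ring
    linarith [h3]
  -- the test multiplier for the infeasibility bound
  have hltc : ∃ lt : ∀ i, EuclideanSpace ℝ (Fin (m i)),
      (∀ i, ‖lt i‖ ≤ 2 * ‖ls i‖) ∧
      (∑ i, ⟪lt i, mvec (A i) (xbar t i) + mvec (B i) (ybar t) - b i⟫
        = 2 * ∑ i, ‖ls i‖ * ‖mvec (A i) (xbar t i) + mvec (B i) (ybar t) - b i‖) := by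
    refine ⟨fun i => if h : (mvec (A i) (xbar t i) + mvec (B i) (ybar t) - b i) = 0 then 0
      else (2 * ‖ls i‖ / ‖mvec (A i) (xbar t i) + mvec (B i) (ybar t) - b i‖) •
        (mvec (A i) (xbar t i) + mvec (B i) (ybar t) - b i), ?_, ?_⟩
    · intro i
      by_cases h : (mvec (A i) (xbar t i) + mvec (B i) (ybar t) - b i) = 0
      · simp only [dif_pos h, norm_zero]
        positivity
      · simp only [dif_neg h]
        have hn : ‖mvec (A i) (xbar t i) + mvec (B i) (ybar t) - b i‖ ≠ 0 :=
          norm_ne_zero_iff.mpr h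
        rw [norm_smul, Real.norm_eq_abs, abs_of_nonneg (by positivity),
          div_mul_cancel₀ _ hn]
    · rw [Finset.mul_sum]
      refine Finset.sum_congr rfl fun i _ => ?_
      by_cases h : (mvec (A i) (xbar t i) + mvec (B i) (ybar t) - b i) = 0
      · simp [h]
      · simp only [dif_neg h]
        have hn : ‖mvec (A i) (xbar t i) + mvec (B i) (ybar t) - b i‖ ≠ 0 :=
          norm_ne_zero_iff.mpr h
        rw [real_inner_smul_left, real_inner_self_eq_norm_sq]
        field_simp
  obtain ⟨ltc, hltc1, hltc2⟩ := hltc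
  have hst2 := hstar ltc
  rw [hltc2] at hst2
  have hw2 := hWC ltc hltc1
  have hdiv2 := (div_le_div_iff_of_pos_right htR).mpr hw2
  have hclaim2 : ∑ i, ‖ls i‖ * ‖mvec (A i) (xbar t i) + mvec (B i) (ybar t) - b i‖
      ≤ ((∑ i, ((γ i)⁻¹ * (4 * ‖ls i‖ ^ 2 + ‖lam 0 i‖ ^ 2)
            + (2 * c i)⁻¹ * (‖xs i - x 0 i‖ ^ 2
              - c i * γ i * ‖mvec (A i) (xs i) - mvec (A i) (x 0 i)‖ ^ 2)))
        + (1/2 : ℝ) * ∑ i, γ i * ‖mvec (B i) ys - mvec (B i) (y 0)‖ ^ 2) / t := by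
    linarith [hst2, hlow, hdiv2]
  refine ⟨abs_le.mpr ⟨?_, ?_⟩, hclaim2⟩
  · linarith [hlow, hclaim2]
  · have hz := hstar (fun _ => 0)
    have hw0 := hWC (fun _ => 0) (fun i => by simp only [norm_zero]; positivity)
    beta_reduce at hz hw0
    simp only [inner_zero_left, Finset.sum_const_zero, add_zero] at hz
    have hdiv0 := (div_le_div_iff_of_pos_right htR).mpr hw0
    linarith [hz, hdiv0]
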